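/- Let the sequences {(x_k, y_k, z_k)}, {(x*_k, Δy*_k, z*_k)}, {ρ_k}, {σ_k}, {η_k}, {ω_k} be generated by the stabilized LCL algorithm with tolerances ω_* = 0 and η_* = 0. Suppose the iterates {x*_k} (together with {x_k}) lie in a compact set, and that Ĵ(x*) has full row rank at every limit point x* of {x*_k}. Suppose (GNP) is infeasible in the sense that there exists δ > 0 with ‖c(x)‖ > δ for all x ≥ 0. Let x* be any limit point of {x*_k}, with 𝒦 the index set of a subsequence converging to x*. Then J(x*_k)ᵀc(x*_k) converges, as k ∈ 𝒦 tends to infinity, to z* := J(x*)ᵀc(x*), and (x*, z*) is a first-order KKT point for the problem: minimize (1/2)‖c(x)‖² subject to x ≥ 0; that is, J(x*)ᵀc(x*) = z* and min(x*, z*) = 0 componentwise. -/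

import Mathlib

open scoped RealInnerProductSpace
open Filter Topology

noncomputable section

attribute [local instance] Classical.propDecidable

/-- Euclidean space ℝ^n. -/
abbrev Evec (n : ℕ) := EuclideanSpace ℝ (Fin n)

/-- Componentwise minimum of two vectors. -/
def vmin {n : ℕ} (x z : Evec n) : Evec n := WithLp.toLp 2 (fun i => min (x i) (z i))

/-- The ∞-norm of a vector. -/
def normInf {n : ℕ} (x : Evec n) : ℝ := ⨆ i, |x i|


lemma abs_apply_le_normInf {n : ℕ} (v : Evec n) (i : Fin n) : |v i| ≤ normInf v :=
  show |v i| ≤ ⨆ j, |v j| from le_ciSup (f := fun j => |v j|) (Set.finite_range _).bddAbove i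

lemma tendsto_evec_iff {α : Type*} {l : Filter α} {N : ℕ} (f : α → Evec N) (a : Evec N) :
    Tendsto f l (𝓝 a) ↔ ∀ i, Tendsto (fun k => f k i) l (𝓝 (a i)) := by
  rw [(PiLp.continuousLinearEquiv 2 ℝ (fun _ : Fin N => ℝ)).toHomeomorph.isInducing.tendsto_nhds_iff]
  exact tendsto_pi_nhds

/-- Transpose (adjoint) of a linear map between Euclidean spaces. -/
def Jt {n m : ℕ} (A : Evec n →L[ℝ] Evec m) : Evec m →L[ℝ] Evec n :=
  ContinuousLinearMap.adjoint A

/-- Restriction of a vector `v` to the set of indices `i` with `xs i > 0`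
(the inactive bounds at `xs`). -/
def hatVec {n : ℕ} (xs : Evec n) (v : Evec n) : EuclideanSpace ℝ {i : Fin n // 0 < xs i} :=
  WithLp.toLp 2 (fun (i : {i : Fin n // 0 < xs i}) => v i.1)

/-- "Ĵ has full row rank": the restriction of the transpose of `A` to the
inactive indices of `xs` is injective. -/
def FullRank {n m : ℕ} (A : Evec n →L[ℝ] Evec m) (xs : Evec n) : Prop :=
  Function.Injective (fun y : Evec m => hatVec xs (Jt A y))

/-- First-order KKT point for (GNP). -/
def isKKT {n m : ℕ} (c : Evec n → Evec m) (g : Evec n → Evec n)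
    (J : Evec n → (Evec n →L[ℝ] Evec m)) (x : Evec n) (y : Evec m) (z : Evec n) : Prop :=
  c x = 0 ∧ g x - Jt (J x) y = z ∧ vmin x z = 0

/-- The stabilized LCL algorithm: problem data, parameters, and the sequences
of iterates it generates, together with the rules that govern them. -/
structure LCL (n m : ℕ) where
  /-- objective function -/
  f : Evec n → ℝ
  /-- nonlinear constraint functions -/
  c : Evec n → Evec m
  /-- gradient of `f` -/
  g : Evec n → Evec n
  /-- Jacobian of `c` -/
  J : Evec n → (Evec n →L[ℝ] Evec m)
  /-- open set containing the nonnegative orthant on which `f, c` are C² -/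
  U : Set (Evec n)
  hUopen : IsOpen U
  hUorth : {x : Evec n | ∀ i, 0 ≤ x i} ⊆ U
  hf : ContDiffOn ℝ 2 f U
  hc : ContDiffOn ℝ 2 c U
  hg : ∀ x ∈ U, HasGradientAt f (g x) x
  hJ : ∀ x ∈ U, HasFDerivAt c (J x) x
  -- fixed parameters
  tauρ : ℝ
  tauσ : ℝ
  alf : ℝ
  bet : ℝ
  σlo : ℝ
  σhi : ℝ
  ωstar : ℝ
  ηstar : ℝ
  htauρ : 1 < tauρ
  htauσ : 1 < tauσ
  half0 : 0 < alf
  half1 : alf < 1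
  hbet : 0 < bet
  hσlo : 0 < σlo
  hσlohi : σlo ≤ σhi
  hωstar : 0 ≤ ωstar
  hηstar : 0 ≤ ηstar
  -- the sequences of iterates
  x : ℕ → Evec n
  y : ℕ → Evec m
  z : ℕ → Evec n
  /-- subproblem solutions x*_k -/
  xs : ℕ → Evec n
  /-- subproblem multipliers Δy*_k -/
  dys : ℕ → Evec m
  /-- subproblem reduced costs z*_k -/
  zs : ℕ → Evec n
  ρ : ℕ → ℝ
  σ : ℕ → ℝ
  η : ℕ → ℝ
  ω : ℕ → ℝ
  hρ0 : 1 < ρ 0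
  hσ0 : 0 < σ 0
  hη0 : 0 < η 0
  -- choice of subproblem tolerances: ω_k ≥ ω_* and ω_k → ω_*
  hω_lb : ∀ k, ωstar ≤ ω k
  hω_to : Filter.Tendsto ω Filter.atTop (nhds ωstar)
  -- the inexact elastic subproblem conditions (59)
  sub_nonneg : ∀ k, ∀ i, 0 ≤ xs k i
  sub_lin : ∀ k, ∃ v w : Evec m, (∀ i, 0 ≤ v i) ∧ (∀ i, 0 ≤ w i) ∧
    c (x k) + J (x k) (xs k - x k) + v - w = 0
  sub_grad : ∀ k,
    g (xs k) - Jt (J (xs k)) (y k - ρ k • c (xs k)) - Jt (J (x k)) (dys k) = zs k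
  sub_opt : ∀ k, normInf (vmin (xs k) (zs k)) ≤ ω k
  sub_dy : ∀ k, normInf (dys k) ≤ σ k + ω k
  -- successful iteration updates
  upd_succ : ∀ k, ‖c (xs k)‖ ≤ max ηstar (η k) →
    x (k+1) = xs k ∧
    y (k+1) = y k + dys k - ρ k • c (xs k) ∧
    z (k+1) = zs k ∧
    ρ (k+1) = ρ k ∧
    σ (k+1) = max σlo (min (normInf (dys k)) σhi) ∧
    η (k+1) = η k / ρ (k+1) ^ bet
  -- unsuccessful iteration updates
  upd_fail : ∀ k, ¬ ‖c (xs k)‖ ≤ max ηstar (η k) →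
    x (k+1) = x k ∧
    y (k+1) = y k ∧
    z (k+1) = z k ∧
    ρ (k+1) = tauρ * ρ k ∧
    σ (k+1) = σ k / tauσ ∧
    η (k+1) = η 0 / ρ (k+1) ^ alf

/-- The updated multiplier estimate ŷ_k = y*_k − ρ_k c(x*_k). -/
def LCL.yhat {n m : ℕ} (A : LCL n m) (k : ℕ) : Evec m :=
  A.y k + A.dys k - A.ρ k • A.c (A.xs k)

set_option maxHeartbeats 2000000 in
/-- Theorem 3: convergence on infeasible problems. -/
theorem stmt12 {n m : ℕ} (A : LCL n m)
    (hws : A.ωstar = 0) (hes : A.ηstar = 0)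
    -- compactness of the iterates
    (B : Set (Evec n)) (hB : IsCompact B)
    (hxsB : ∀ k, A.xs k ∈ B) (hxB : ∀ k, A.x k ∈ B)
    -- Ĵ has full row rank at every limit point of {x*_k}
    (hFRall : ∀ xl : Evec n, MapClusterPt xl atTop A.xs → FullRank (A.J xl) xl)
    -- (GNP) is infeasible
    (hinf : ∃ δ > 0, ∀ x : Evec n, (∀ i, 0 ≤ x i) → δ < ‖A.c x‖)
    -- x* is a limit point of {x*_k}, along the subsequence indexed by 𝒦
    (xstar : Evec n) (K : Set ℕ) (hK : K.Infinite)
    (hconv : Tendsto A.xs (atTop ⊓ 𝓟 K) (𝓝 xstar)) :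
    Tendsto (fun k => Jt (A.J (A.xs k)) (A.c (A.xs k))) (atTop ⊓ 𝓟 K)
      (𝓝 (Jt (A.J xstar) (A.c xstar))) ∧
    vmin xstar (Jt (A.J xstar) (A.c xstar)) = 0 := by
  classical
  obtain ⟨δ, hδ, hδc⟩ := hinf
  set F := atTop ⊓ 𝓟 K with hF
  have hFbot : F.NeBot := by
    rw [hF, ← Nat.cofinite_eq_atTop]
    exact Filter.cofinite_inf_principal_neBot_iff.2 hK
  have hFle : F ≤ atTop := inf_le_left
  -- basic facts about the parameter sequences
  have hρ1 : ∀ k, 1 < A.ρ k := by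
    intro k; induction k with
    | zero => exact A.hρ0
    | succ k ih =>
      by_cases h : ‖A.c (A.xs k)‖ ≤ max A.ηstar (A.η k)
      · rw [(A.upd_succ k h).2.2.2.1]; exact ih
      · rw [(A.upd_fail k h).2.2.2.1]; nlinarith [A.htauρ]
  have hρmono : Monotone A.ρ := by
    apply monotone_nat_of_le_succ
    intro k
    by_cases h : ‖A.c (A.xs k)‖ ≤ max A.ηstar (A.η k)
    · rw [(A.upd_succ k h).2.2.2.1]
    · rw [(A.upd_fail k h).2.2.2.1]; nlinarith [A.htauρ, hρ1 k]
  have hηpos : ∀ k, 0 < A.η k := by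
    intro k; induction k with
    | zero => exact A.hη0
    | succ k ih =>
      by_cases h : ‖A.c (A.xs k)‖ ≤ max A.ηstar (A.η k)
      · rw [(A.upd_succ k h).2.2.2.2.2]
        exact div_pos ih (Real.rpow_pos_of_pos (by linarith [hρ1 (k+1)]) _)
      · rw [(A.upd_fail k h).2.2.2.2.2]
        exact div_pos A.hη0 (Real.rpow_pos_of_pos (by linarith [hρ1 (k+1)]) _)
  have hsucc_eta : ∀ k, ‖A.c (A.xs k)‖ ≤ max A.ηstar (A.η k) → δ < A.η k := by
    intro k h
    have h1 : δ < ‖A.c (A.xs k)‖ := hδc _ (A.sub_nonneg k)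
    have h2 : δ < max A.ηstar (A.η k) := lt_of_lt_of_le h1 h
    rw [hes] at h2
    calc δ < max 0 (A.η k) := h2
      _ = A.η k := max_eq_right (hηpos k).le
  -- eventually, every iteration is unsuccessful
  have key : ∃ N, ∀ k, N ≤ k → ¬ ‖A.c (A.xs k)‖ ≤ max A.ηstar (A.η k) := by
    by_cases hfin : {k : ℕ | ¬ ‖A.c (A.xs k)‖ ≤ max A.ηstar (A.η k)}.Finite
    · -- all iterations eventually succeed; η decreases geometrically, contradiction
      exfalso
      obtain ⟨M, hM⟩ : ∃ M, ∀ k, M ≤ k → ‖A.c (A.xs k)‖ ≤ max A.ηstar (A.η k) := by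
        rcases hfin.bddAbove with ⟨M, hMb⟩
        exact ⟨M + 1, fun k hk => by
          by_contra hc
          exact absurd (hMb hc) (by omega)⟩
      set r : ℝ := A.ρ M ^ A.bet with hr
      have hρM : 1 < A.ρ M := hρ1 M
      have hr1 : 1 < r := Real.one_lt_rpow_iff_of_pos (by linarith) |>.2 (Or.inl ⟨hρM, A.hbet⟩)
      have hρconst : ∀ t, A.ρ (M + t) = A.ρ M := by
        intro t; induction t with
        | zero => rfl
        | succ t ih =>
          have h2 := (A.upd_succ (M + t) (hM _ (by omega))).2.2.2.1
          rw [show M + (t+1) = (M+t) + 1 by omega, h2, ih]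
      have hηgeom : ∀ t, A.η (M + t) = A.η M / r ^ t := by
        intro t; induction t with
        | zero => simp
        | succ t ih =>
          have h2 := (A.upd_succ (M + t) (hM _ (by omega))).2.2.2.2.2
          rw [show M + (t+1) = (M+t) + 1 by omega, h2, ih,
            show (M+t) + 1 = M + (t+1) by omega, hρconst (t+1), ← hr]
          rw [div_div, pow_succ]
      obtain ⟨t, ht⟩ : ∃ t : ℕ, A.η M / δ < r ^ t := pow_unbounded_of_one_lt _ hr1
      have h3 : A.η (M + t) < δ := by
        rw [hηgeom t]
        rw [div_lt_iff₀ (by positivity)]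
        rw [div_lt_iff₀ hδ] at ht
        linarith
      exact absurd (hsucc_eta _ (hM (M + t) (by omega))) (by linarith)
    · -- infinitely many failures: ρ → ∞ along failures, η eventually below δ
      have hfin : {k : ℕ | ¬ ‖A.c (A.xs k)‖ ≤ max A.ηstar (A.η k)}.Infinite := hfin
      have hgrow : ∀ i : ℕ, ∃ j, (¬ ‖A.c (A.xs j)‖ ≤ max A.ηstar (A.η j)) ∧
          A.tauρ ^ i ≤ A.ρ (j + 1) := by
        intro i; induction i with
        | zero =>
          obtain ⟨j, hj⟩ := hfin.nonempty
          exact ⟨j, hj, by simpa using (by linarith [hρ1 (j+1)] : (1:ℝ) ≤ A.ρ (j+1))⟩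
        | succ i ih =>
          obtain ⟨j, hj, hje⟩ := ih
          obtain ⟨j', hj', hjj'⟩ := hfin.exists_gt j
          refine ⟨j', hj', ?_⟩
          have h4 := (A.upd_fail j' hj').2.2.2.1
          have h5 : A.ρ (j + 1) ≤ A.ρ j' := hρmono (by omega)
          have htp : (0:ℝ) < A.tauρ := by linarith [A.htauρ]
          calc A.tauρ ^ (i+1) = A.tauρ * A.tauρ ^ i := by ring
            _ ≤ A.tauρ * A.ρ (j + 1) := by nlinarith
            _ ≤ A.tauρ * A.ρ j' := by nlinarith
            _ = A.ρ (j' + 1) := h4.symm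
      set T : ℝ := max 1 ((A.η 0 / δ) ^ A.alf⁻¹) with hT
      obtain ⟨i, hi⟩ : ∃ i : ℕ, T < A.tauρ ^ i := pow_unbounded_of_one_lt _ A.htauρ
      obtain ⟨j, hjf, hjρ⟩ := hgrow i
      have hTρ : T < A.ρ (j + 1) := lt_of_lt_of_le hi hjρ
      have hρj1 : (1:ℝ) < A.ρ (j+1) := hρ1 _
      have hη0δ : (0:ℝ) < A.η 0 / δ := div_pos A.hη0 hδ
      have hkey : A.η 0 / δ < A.ρ (j + 1) ^ A.alf := by
        have h6 : (A.η 0 / δ) ^ A.alf⁻¹ < A.ρ (j + 1) := lt_of_le_of_lt (le_max_right _ _) hTρ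
        have h7 : ((A.η 0 / δ) ^ A.alf⁻¹) ^ A.alf < A.ρ (j + 1) ^ A.alf :=
          Real.rpow_lt_rpow (Real.rpow_nonneg hη0δ.le _) h6 A.half0
        rwa [← Real.rpow_mul hη0δ.le, inv_mul_cancel₀ (ne_of_gt A.half0), Real.rpow_one] at h7
      have hηlt : ∀ t, A.η (j + 1 + t) < δ := by
        have hbase : ∀ k, j + 1 ≤ k → A.η 0 / A.ρ k ^ A.alf < δ := by
          intro k hk
          have h8 : A.ρ (j+1) ^ A.alf ≤ A.ρ k ^ A.alf :=
            Real.rpow_le_rpow (by linarith) (hρmono hk) A.half0.le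
          have h9 : (0:ℝ) < A.ρ (j+1) ^ A.alf := Real.rpow_pos_of_pos (by linarith) _
          have h10 : (0:ℝ) < A.ρ k ^ A.alf := Real.rpow_pos_of_pos (by linarith [hρ1 k]) _
          rw [div_lt_iff₀ h10]
          rw [div_lt_iff₀ hδ] at hkey
          nlinarith
        intro t; induction t with
        | zero =>
          have h2 := (A.upd_fail j hjf).2.2.2.2.2
          rw [show j + 1 + 0 = j + 1 by omega, h2]
          exact hbase (j+1) le_rfl
        | succ t ih =>
          have hfk : ¬ ‖A.c (A.xs (j+1+t))‖ ≤ max A.ηstar (A.η (j+1+t)) := by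
            intro hs; exact absurd (hsucc_eta _ hs) (by linarith)
          have h2 := (A.upd_fail (j+1+t) hfk).2.2.2.2.2
          rw [show j + 1 + (t+1) = (j+1+t) + 1 by omega, h2]
          exact hbase _ (by omega)
      refine ⟨j + 1, fun k hk hs => ?_⟩
      obtain ⟨t, rfl⟩ : ∃ t, k = j + 1 + t := ⟨k - (j+1), by omega⟩
      exact absurd (hsucc_eta _ hs) (by linarith [hηlt t])
  obtain ⟨N, hfail⟩ := key
  -- consequences: x, y frozen; ρ → ∞; σ → 0
  have hxconst : ∀ t, A.x (N + t) = A.x N := by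
    intro t; induction t with
    | zero => rfl
    | succ t ih =>
      rw [show N + (t+1) = (N+t) + 1 by omega, (A.upd_fail (N+t) (hfail _ (by omega))).1]
      exact ih
  have hyconst : ∀ t, A.y (N + t) = A.y N := by
    intro t; induction t with
    | zero => rfl
    | succ t ih =>
      rw [show N + (t+1) = (N+t) + 1 by omega, (A.upd_fail (N+t) (hfail _ (by omega))).2.1]
      exact ih
  have hρgeom : ∀ t, A.ρ (N + t) = A.tauρ ^ t * A.ρ N := by
    intro t; induction t with
    | zero => simp
    | succ t ih =>
      rw [show N + (t+1) = (N+t) + 1 by omega, (A.upd_fail (N+t) (hfail _ (by omega))).2.2.2.1,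
        ih, pow_succ]
      ring
  have hσgeom : ∀ t, A.σ (N + t) = A.σ N * (A.tauσ⁻¹) ^ t := by
    intro t; induction t with
    | zero => simp
    | succ t ih =>
      rw [show N + (t+1) = (N+t) + 1 by omega, (A.upd_fail (N+t) (hfail _ (by omega))).2.2.2.2.1,
        ih, pow_succ, div_eq_mul_inv]
      ring
  have hρtop : Tendsto A.ρ atTop atTop := by
    apply tendsto_atTop_atTop_of_monotone hρmono
    intro bb
    obtain ⟨i, hi⟩ : ∃ i : ℕ, bb < A.tauρ ^ i := pow_unbounded_of_one_lt _ A.htauρ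
    refine ⟨N + i, ?_⟩
    rw [hρgeom i]
    have hp : (0:ℝ) < A.tauρ ^ i := pow_pos (by linarith [A.htauρ]) _
    nlinarith [hρ1 N]
  have hρinv : Tendsto (fun k => (A.ρ k)⁻¹) atTop (𝓝 0) := hρtop.inv_tendsto_atTop
  have hσ0' : Tendsto A.σ atTop (𝓝 0) := by
    rw [← tendsto_add_atTop_iff_nat N]
    have h11 : Tendsto (fun t : ℕ => A.σ N * (A.tauσ⁻¹) ^ t) atTop (𝓝 (A.σ N * 0)) :=
      (tendsto_pow_atTop_nhds_zero_of_lt_one (inv_nonneg.2 (by linarith [A.htauσ]))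
        (by rw [inv_lt_one_iff₀]; right; exact A.htauσ)).const_mul _
    rw [mul_zero] at h11
    refine h11.congr fun t => ?_
    rw [← hσgeom t, Nat.add_comm]
  have hω0 : Tendsto A.ω atTop (𝓝 0) := hws ▸ A.hω_to
  have hωnn : ∀ k, 0 ≤ A.ω k := fun k => hws ▸ A.hω_lb k
  have hσω : Tendsto (fun k => A.σ k + A.ω k) atTop (𝓝 0) := by
    simpa using hσ0'.add hω0
  -- dys → 0
  have hdys0 : Tendsto A.dys atTop (𝓝 0) := by
    rw [tendsto_evec_iff]
    intro i
    refine squeeze_zero_norm (fun k => ?_) hσω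
    exact le_trans (abs_apply_le_normInf (A.dys k) i) (A.sub_dy k)
  -- nonnegativity and membership of xstar
  have hxsi : ∀ i, Tendsto (fun k => A.xs k i) F (𝓝 (xstar i)) :=
    (tendsto_evec_iff A.xs xstar).1 hconv
  have hxsnn : ∀ i, 0 ≤ xstar i := fun i =>
    ge_of_tendsto' (hxsi i) (fun k => A.sub_nonneg k i)
  have hxU : xstar ∈ A.U := A.hUorth hxsnn
  -- continuity of J, g, c on U
  have hJeq : Set.EqOn A.J (fderiv ℝ A.c) A.U := fun x hx => ((A.hJ x hx).fderiv).symm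
  have hJcont : ContinuousOn A.J A.U :=
    (A.hc.continuousOn_fderiv_of_isOpen A.hUopen (by norm_num)).congr hJeq
  have hccont : ContinuousOn A.c A.U := A.hc.continuousOn
  have hJtcont : ContinuousOn (fun x => Jt (A.J x)) A.U :=
    (ContinuousLinearMap.adjoint (𝕜 := ℝ) (E := Evec n) (F := Evec m)).continuous.comp_continuousOn
      hJcont
  have hgoal1 : Tendsto (fun k => Jt (A.J (A.xs k)) (A.c (A.xs k))) F
      (𝓝 (Jt (A.J xstar) (A.c xstar))) := by
    have hc1 : ContinuousOn (fun x => Jt (A.J x) (A.c x)) A.U := hJtcont.clm_apply hccont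
    exact ((hc1.continuousAt (A.hUopen.mem_nhds hxU)).tendsto).comp hconv
  refine ⟨hgoal1, ?_⟩
  -- the gradient is continuous on U
  have hgeq : Set.EqOn A.g
      (fun x => (InnerProductSpace.toDual ℝ (Evec n)).symm (fderiv ℝ A.f x)) A.U := by
    intro x hx
    have h2 := (A.hg x hx).hasFDerivAt.fderiv
    show A.g x = (InnerProductSpace.toDual ℝ (Evec n)).symm (fderiv ℝ A.f x)
    rw [h2, LinearIsometryEquiv.symm_apply_apply]
  have hgcont : ContinuousOn A.g A.U := by
    refine ContinuousOn.congr ?_ hgeq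
    exact (InnerProductSpace.toDual ℝ (Evec n)).symm.continuous.comp_continuousOn
      (A.hf.continuousOn_fderiv_of_isOpen A.hUopen (by norm_num))
  -- the scaled dual vector w k converges to zstar
  set zst : Evec n := Jt (A.J xstar) (A.c xstar) with hzst
  set w : ℕ → Evec n := fun k => (A.ρ k)⁻¹ • A.zs k with hw
  set b : ℕ → Evec n := fun k =>
    A.g (A.xs k) - Jt (A.J (A.xs k)) (A.y k) - Jt (A.J (A.x k)) (A.dys k) with hb
  have hzs_eq : ∀ k, A.zs k = b k + A.ρ k • Jt (A.J (A.xs k)) (A.c (A.xs k)) := by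
    intro k
    have h12 := A.sub_grad k
    rw [map_sub, map_smul] at h12
    rw [← h12, hb]
    abel_nf
    rw [add_left_comm (-1 • _ : Evec n), add_left_comm (A.g (A.xs k))]
  have hweq : ∀ k, w k = (A.ρ k)⁻¹ • b k + Jt (A.J (A.xs k)) (A.c (A.xs k)) := by
    intro k
    have hρne : A.ρ k ≠ 0 := by linarith [hρ1 k]
    rw [hw]
    simp only [hzs_eq k, smul_add, smul_smul, inv_mul_cancel₀ hρne, one_smul]
  have hbF : Tendsto b F (𝓝 (A.g xstar - Jt (A.J xstar) (A.y N) - 0)) := by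
    have t1 : Tendsto (fun k => A.g (A.xs k)) F (𝓝 (A.g xstar)) :=
      ((hgcont.continuousAt (A.hUopen.mem_nhds hxU)).tendsto).comp hconv
    have t2 : Tendsto (fun k => Jt (A.J (A.xs k)) (A.y N)) F (𝓝 (Jt (A.J xstar) (A.y N))) := by
      have hc2 : ContinuousOn (fun x => Jt (A.J x) (A.y N)) A.U :=
        hJtcont.clm_apply continuousOn_const
      exact ((hc2.continuousAt (A.hUopen.mem_nhds hxU)).tendsto).comp hconv
    have t3 : Tendsto (fun k => Jt (A.J (A.x N)) (A.dys k)) F (𝓝 0) := by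
      have h2 := ((Jt (A.J (A.x N))).continuous.tendsto 0).comp (hdys0.mono_left hFle)
      simpa [Function.comp_def] using h2
    have t4 : Tendsto (fun k => A.g (A.xs k) - Jt (A.J (A.xs k)) (A.y N)
        - Jt (A.J (A.x N)) (A.dys k)) F (𝓝 (A.g xstar - Jt (A.J xstar) (A.y N) - 0)) :=
      (t1.sub t2).sub t3
    refine t4.congr' ?_
    have hev : ∀ᶠ k in F, N ≤ k := hFle (eventually_ge_atTop N)
    filter_upwards [hev] with k hk
    obtain ⟨t, rfl⟩ : ∃ t, k = N + t := ⟨k - N, by omega⟩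
    rw [hb]
    simp only [hyconst t, hxconst t]
  have hwF : Tendsto w F (𝓝 zst) := by
    have t5 : Tendsto (fun k => (A.ρ k)⁻¹ • b k) F
        (𝓝 ((0:ℝ) • (A.g xstar - Jt (A.J xstar) (A.y N) - 0))) :=
      Tendsto.smul (hρinv.mono_left hFle) hbF
    rw [zero_smul] at t5
    have t6 := t5.add hgoal1
    rw [zero_add] at t6
    exact t6.congr fun k => (hweq k).symm
  have hwi : ∀ i, Tendsto (fun k => w k i) F (𝓝 (zst i)) :=
    (tendsto_evec_iff w zst).1 hwF
  -- componentwise analysis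
  have hminbd : ∀ k (i : Fin n), |min (A.xs k i) (A.zs k i)| ≤ A.ω k := fun k i =>
    le_trans (by simpa [vmin] using abs_apply_le_normInf (vmin (A.xs k) (A.zs k)) i) (A.sub_opt k)
  have hwapp : ∀ k (i : Fin n), w k i = (A.ρ k)⁻¹ * A.zs k i := fun k i => rfl
  have hnegω : Tendsto (fun k => -(A.ω k)) atTop (𝓝 0) := by simpa using hω0.neg
  ext i
  show min (xstar i) (zst i) = 0
  rcases eq_or_lt_of_le (hxsnn i) with hx0 | hx0
  · -- xstar i = 0 : show 0 ≤ zst i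
    have hzge : 0 ≤ zst i := by
      refine le_of_tendsto_of_tendsto' (hnegω.mono_left hFle) (hwi i) fun k => ?_
      have habs := abs_le.1 (hminbd k i)
      have hmr := min_le_right (A.xs k i) (A.zs k i)
      have h13 : -(A.ω k) ≤ A.zs k i := by linarith [habs.1]
      have hρk := hρ1 k
      have hρinv1 : (A.ρ k)⁻¹ ≤ 1 := by
        rw [inv_le_one_iff₀]; right; linarith
      have hρinvpos : 0 < (A.ρ k)⁻¹ := by positivity
      rw [hwapp k i]
      nlinarith [hωnn k]
    rw [← hx0, min_eq_left hzge]
  · -- xstar i > 0 : show zst i = 0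
    have hzs_small : ∀ᶠ k in F, |A.zs k i| ≤ A.ω k := by
      have e1 : ∀ᶠ k in F, xstar i / 2 < A.xs k i :=
        (hxsi i).eventually (eventually_gt_nhds (by linarith))
      have e2 : ∀ᶠ k in F, A.ω k < xstar i / 2 :=
        (hω0.mono_left hFle).eventually (eventually_lt_nhds (by linarith))
      filter_upwards [e1, e2] with k h1 h2
      have hzlt : A.zs k i < A.xs k i := by
        by_contra hge
        push_neg at hge
        have h15 := hminbd k i
        rw [min_eq_left hge] at h15
        have h16 := abs_le.1 h15
        linarith [h16.2]
      have h15 := hminbd k i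
      rwa [min_eq_right hzlt.le] at h15
    have hzero : Tendsto (fun k => w k i) F (𝓝 0) := by
      refine tendsto_of_tendsto_of_tendsto_of_le_of_le' (hnegω.mono_left hFle)
        (hω0.mono_left hFle) ?_ ?_
      · filter_upwards [hzs_small] with k h14
        have hρk := hρ1 k
        have hρinv1 : (A.ρ k)⁻¹ ≤ 1 := by rw [inv_le_one_iff₀]; right; linarith
        have hρinvpos : (0:ℝ) < (A.ρ k)⁻¹ := by positivity
        have h16 := abs_le.1 h14
        rw [hwapp k i]
        nlinarith [hωnn k]
      · filter_upwards [hzs_small] with k h14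
        have hρk := hρ1 k
        have hρinv1 : (A.ρ k)⁻¹ ≤ 1 := by rw [inv_le_one_iff₀]; right; linarith
        have hρinvpos : (0:ℝ) < (A.ρ k)⁻¹ := by positivity
        have h16 := abs_le.1 h14
        rw [hwapp k i]
        nlinarith [hωnn k]
    have hz0 : zst i = 0 := tendsto_nhds_unique (hwi i) hzero
    rw [hz0, min_eq_right (le_of_lt hx0)]
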